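/- arXiv:math/0301236 — 2 statements merged into one kernel-verified Lean document; each statement's English description precedes it below -/
import Mathlib

section
/- Let S^{ab} = S^{ba}, γ^a, θ be smooth real-valued functions on ℝⁿ and let Δ_w (w ∈ ℝ) be the associated canonical pencil. Then the pencil satisfies the self-adjointness condition (Δ_w)* = Δ_{1−w}: for every w ∈ ℝ, every compactly supported smooth function f on ℝⁿ and every smooth function g on ℝⁿ that is compactly supported, ∫_{ℝⁿ} (Δ_w f)(x)·g(x) dx = ∫_{ℝⁿ} f(x)·(Δ_{1−w} g)(x) dx. -/
open scoped BigOperators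

/-- Partial derivative `∂_a f` of a function on `ℝⁿ`. -/
noncomputable def pd {n : ℕ} (a : Fin n) (f : (Fin n → ℝ) → ℝ) : (Fin n → ℝ) → ℝ :=
  fun x => fderiv ℝ f x (Pi.single a 1)

/-- The canonical pencil of operators associated to data `(S^{ab}, γ^a, θ)`:
`Δ_w f = (1/2)·(Σ_{a,b} S^{ab} ∂_a∂_b f + Σ_a (Σ_b ∂_b S^{ba} + (2w−1)γ^a) ∂_a f
  + (w·Σ_a ∂_a γ^a + w(w−1)·θ)·f)`. -/
noncomputable def canonicalPencil {n : ℕ} (S : Fin n → Fin n → (Fin n → ℝ) → ℝ)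
    (γ : Fin n → (Fin n → ℝ) → ℝ) (θ : (Fin n → ℝ) → ℝ) (w : ℝ)
    (f : (Fin n → ℝ) → ℝ) : (Fin n → ℝ) → ℝ :=
  fun x => (1/2) * ((∑ a, ∑ b, S a b x * pd a (pd b f) x)
    + (∑ a, ((∑ b, pd b (S b a) x) + (2 * w - 1) * γ a x) * pd a f x)
    + (w * (∑ a, pd a (γ a) x) + w * (w - 1) * θ x) * f x)

open MeasureTheory

attribute [fun_prop] ContDiff.sum

@[fun_prop]
lemma contDiff_pd {n : ℕ} (a : Fin n) {f : (Fin n → ℝ) → ℝ} (hf : ContDiff ℝ (⊤ : ℕ∞) f) :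
    ContDiff ℝ (⊤ : ℕ∞) (pd a f) := by
  have h : ContDiff ℝ (⊤ : ℕ∞) (fderiv ℝ f) := hf.fderiv_right (by exact_mod_cast le_top)
  exact (ContinuousLinearMap.apply ℝ ℝ (Pi.single a 1)).contDiff.comp h

@[fun_prop]
lemma continuous_pd {n : ℕ} (a : Fin n) {f : (Fin n → ℝ) → ℝ} (hf : ContDiff ℝ (⊤ : ℕ∞) f) :
    Continuous (pd a f) := (contDiff_pd a hf).continuous

lemma hasCompactSupport_pd {n : ℕ} (a : Fin n) {f : (Fin n → ℝ) → ℝ}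
    (hf : HasCompactSupport f) : HasCompactSupport (pd a f) :=
  (hf.fderiv (𝕜 := ℝ)).comp_left (g := fun L : (Fin n → ℝ) →L[ℝ] ℝ => L (Pi.single a 1)) rfl

lemma pd_eq_zero_of_not_mem {n : ℕ} (a : Fin n) {f : (Fin n → ℝ) → ℝ} {x : Fin n → ℝ}
    (hx : x ∉ tsupport f) : pd a f x = 0 := by
  have : fderiv ℝ f x = 0 := by
    by_contra h
    exact hx (support_fderiv_subset ℝ (Function.mem_support.2 h))
  simp [pd, this]

lemma integral_pd_eq_zero {n : ℕ} (a : Fin n) {u : (Fin n → ℝ) → ℝ}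
    (hu : ContDiff ℝ (⊤ : ℕ∞) u) (huc : HasCompactSupport u) : ∫ x, pd a u x = 0 := by
  have h := integral_mul_fderiv_eq_neg_fderiv_mul_of_integrable
    (μ := (volume : Measure (Fin n → ℝ))) (f := u) (g := fun _ => (1:ℝ)) (v := Pi.single a 1)
    ?_ ?_ ?_ (fun x _ => hu.differentiable (by simp) x) (fun x _ => differentiableAt_const _)
  · simp only [fderiv_fun_const, Pi.zero_apply, ContinuousLinearMap.zero_apply, mul_zero, mul_one,
      integral_zero] at h
    simpa [pd] using h.symm
  · simp only [mul_one]; exact ((contDiff_pd a hu).continuous.integrable_of_hasCompactSupport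
      (hasCompactSupport_pd a huc))
  · simp only [fderiv_fun_const, Pi.zero_apply, ContinuousLinearMap.zero_apply, mul_zero]
    exact integrable_zero _ _ _
  · simp only [mul_one]; exact hu.continuous.integrable_of_hasCompactSupport huc

lemma pd_add {n : ℕ} (a : Fin n) {u v : (Fin n → ℝ) → ℝ} {x}
    (hu : DifferentiableAt ℝ u x) (hv : DifferentiableAt ℝ v x) :
    pd a (fun y => u y + v y) x = pd a u x + pd a v x := by
  simp [pd, fderiv_fun_add hu hv]

lemma pd_sub {n : ℕ} (a : Fin n) {u v : (Fin n → ℝ) → ℝ} {x}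
    (hu : DifferentiableAt ℝ u x) (hv : DifferentiableAt ℝ v x) :
    pd a (fun y => u y - v y) x = pd a u x - pd a v x := by
  simp [pd, fderiv_fun_sub hu hv]

lemma pd_mul {n : ℕ} (a : Fin n) {u v : (Fin n → ℝ) → ℝ} {x}
    (hu : DifferentiableAt ℝ u x) (hv : DifferentiableAt ℝ v x) :
    pd a (fun y => u y * v y) x = pd a u x * v x + u x * pd a v x := by
  simp [pd, fderiv_fun_mul hu hv]; ring

lemma pd_const_mul {n : ℕ} (a : Fin n) (c : ℝ) {u : (Fin n → ℝ) → ℝ} {x}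
    (hu : DifferentiableAt ℝ u x) :
    pd a (fun y => c * u y) x = c * pd a u x := by
  simp [pd, fderiv_const_mul hu c]

lemma pd_sum {n : ℕ} (a : Fin n) {ι : Type*} (s : Finset ι) {F : ι → (Fin n → ℝ) → ℝ} {x}
    (h : ∀ i ∈ s, DifferentiableAt ℝ (F i) x) :
    pd a (fun y => ∑ i ∈ s, F i y) x = ∑ i ∈ s, pd a (F i) x := by
  simp [pd, fderiv_fun_sum h]

/-- The flux vector field whose divergence is `Δ_w f · g − f · Δ_{1−w} g` (times 2). -/
noncomputable def flux {n : ℕ} (S : Fin n → Fin n → (Fin n → ℝ) → ℝ)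
    (γ : Fin n → (Fin n → ℝ) → ℝ) (w : ℝ) (f g : (Fin n → ℝ) → ℝ) (a : Fin n) :
    (Fin n → ℝ) → ℝ :=
  fun y => (∑ b, S a b y * (pd b f y * g y - f y * pd b g y)) + (2*w-1) * (γ a y * (f y * g y))


/-- the canonical pencil satisfies the self-adjointness condition
`(Δ_w)* = Δ_{1−w}`: for compactly supported smooth `f, g`,
`∫ (Δ_w f)·g = ∫ f·(Δ_{1−w} g)`. -/
theorem canonicalPencil_selfAdjoint {n : ℕ}
    (S : Fin n → Fin n → (Fin n → ℝ) → ℝ)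
    (γ : Fin n → (Fin n → ℝ) → ℝ) (θ : (Fin n → ℝ) → ℝ)
    (hS : ∀ a b, ContDiff ℝ (⊤ : ℕ∞) (S a b)) (hSsym : ∀ a b, S a b = S b a)
    (hγ : ∀ a, ContDiff ℝ (⊤ : ℕ∞) (γ a)) (hθ : ContDiff ℝ (⊤ : ℕ∞) θ)
    (w : ℝ) (f g : (Fin n → ℝ) → ℝ)
    (hf : ContDiff ℝ (⊤ : ℕ∞) f) (hfc : HasCompactSupport f)
    (hg : ContDiff ℝ (⊤ : ℕ∞) g) (hgc : HasCompactSupport g) :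
    ∫ x, canonicalPencil S γ θ w f x * g x
      = ∫ x, f x * canonicalPencil S γ θ (1 - w) g x := by
  -- differentiability facts
  have hfd : Differentiable ℝ f := hf.differentiable (by simp)
  have hgd : Differentiable ℝ g := hg.differentiable (by simp)
  have hpdf : ∀ b, ContDiff ℝ (⊤:ℕ∞) (pd b f) := fun b => contDiff_pd b hf
  have hpdg : ∀ b, ContDiff ℝ (⊤:ℕ∞) (pd b g) := fun b => contDiff_pd b hg
  have hpdfd : ∀ b, Differentiable ℝ (pd b f) :=
    fun b => (hpdf b).differentiable (by simp)
  have hpdgd : ∀ b, Differentiable ℝ (pd b g) :=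
    fun b => (hpdg b).differentiable (by simp)
  have hSd : ∀ a b, Differentiable ℝ (S a b) :=
    fun a b => (hS a b).differentiable (by simp)
  have hγd : ∀ a, Differentiable ℝ (γ a) :=
    fun a => (hγ a).differentiable (by simp)
  -- flux facts
  have hflux_smooth : ∀ a, ContDiff ℝ (⊤:ℕ∞) (flux S γ w f g a) := by
    intro a; unfold flux; fun_prop
  have hflux_cs : ∀ a, HasCompactSupport (flux S γ w f g a) := by
    intro a
    apply HasCompactSupport.intro hfc
    intro x hx
    have h0 : f x = 0 := image_eq_zero_of_notMem_tsupport hx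
    have h1 : ∀ b, pd b f x = 0 := fun b => pd_eq_zero_of_not_mem b hx
    simp [flux, h0, h1]
  -- the divergence identity
  have key : ∀ x, canonicalPencil S γ θ w f x * g x
      = f x * canonicalPencil S γ θ (1 - w) g x
        + (1/2) * ∑ a, pd a (flux S γ w f g a) x := by
    intro x
    have hpdD : ∀ a, pd a (flux S γ w f g a) x
        = (∑ b, (pd a (S a b) x * (pd b f x * g x - f x * pd b g x)
            + S a b x * ((pd a (pd b f) x * g x + pd b f x * pd a g x)
              - (pd a f x * pd b g x + f x * pd a (pd b g) x))))
          + (2*w-1) * (pd a (γ a) x * (f x * g x)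
            + γ a x * (pd a f x * g x + f x * pd a g x)) := by
      intro a
      unfold flux
      rw [pd_add a (by fun_prop) (by fun_prop)]
      congr 1
      · rw [pd_sum a Finset.univ (fun b _ => by fun_prop)]
        refine Finset.sum_congr rfl fun b _ => ?_
        rw [pd_mul a (by fun_prop) (by fun_prop)]
        congr 1
        rw [pd_sub a (by fun_prop) (by fun_prop),
          pd_mul a (by fun_prop) (by fun_prop), pd_mul a (by fun_prop) (by fun_prop)]
      · rw [pd_const_mul a _ (by fun_prop)]
        congr 1
        rw [pd_mul a (by fun_prop) (by fun_prop)]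
        congr 1
        rw [pd_mul a (by fun_prop) (by fun_prop)]
    -- piecewise expansion of the divergence
    have hP : (∑ a, ∑ b, pd a (S a b) x * (pd b f x * g x - f x * pd b g x))
        = (∑ a, ∑ b, pd b (S b a) x * pd a f x) * g x
          - f x * (∑ a, ∑ b, pd b (S b a) x * pd a g x) := by
      have h1 : (∑ a, ∑ b, pd b (S b a) x * pd a f x)
          = ∑ a, ∑ b, pd a (S a b) x * pd b f x := Finset.sum_comm
      have h2 : (∑ a, ∑ b, pd b (S b a) x * pd a g x)
          = ∑ a, ∑ b, pd a (S a b) x * pd b g x := Finset.sum_comm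
      rw [h1, h2, Finset.sum_mul, Finset.mul_sum, ← Finset.sum_sub_distrib]
      refine Finset.sum_congr rfl fun a _ => ?_
      rw [Finset.sum_mul, Finset.mul_sum, ← Finset.sum_sub_distrib]
      exact Finset.sum_congr rfl fun b _ => by ring
    have hX : (∑ a, ∑ b, S a b x * (pd b f x * pd a g x))
        = ∑ a, ∑ b, S a b x * (pd a f x * pd b g x) := by
      rw [Finset.sum_comm]
      exact Finset.sum_congr rfl fun a _ => Finset.sum_congr rfl fun b _ => by rw [hSsym b a]
    have hQ : (∑ a, ∑ b, S a b x * ((pd a (pd b f) x * g x + pd b f x * pd a g x)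
          - (pd a f x * pd b g x + f x * pd a (pd b g) x)))
        = (∑ a, ∑ b, S a b x * pd a (pd b f) x) * g x
          - f x * (∑ a, ∑ b, S a b x * pd a (pd b g) x) := by
      have e : ∀ a b : Fin n, S a b x * ((pd a (pd b f) x * g x + pd b f x * pd a g x)
            - (pd a f x * pd b g x + f x * pd a (pd b g) x))
          = (S a b x * pd a (pd b f) x * g x + S a b x * (pd b f x * pd a g x))
            - (S a b x * (pd a f x * pd b g x) + f x * (S a b x * pd a (pd b g) x)) :=
        fun a b => by ring
      simp only [e, Finset.sum_sub_distrib, Finset.sum_add_distrib]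
      rw [hX]
      simp only [← Finset.sum_mul, ← Finset.mul_sum]
      ring
    have hR : (∑ a, (pd a (γ a) x * (f x * g x)
          + γ a x * (pd a f x * g x + f x * pd a g x)))
        = (∑ a, pd a (γ a) x) * (f x * g x)
          + ((∑ a, γ a x * pd a f x) * g x + f x * (∑ a, γ a x * pd a g x)) := by
      rw [Finset.sum_mul, Finset.sum_mul, Finset.mul_sum, ← Finset.sum_add_distrib,
        ← Finset.sum_add_distrib]
      exact Finset.sum_congr rfl fun a _ => by ring
    have hAf : ∑ a, ((∑ b, pd b (S b a) x) + (2 * w - 1) * γ a x) * pd a f x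
        = (∑ a, ∑ b, pd b (S b a) x * pd a f x) + (2*w-1) * ∑ a, γ a x * pd a f x := by
      rw [Finset.mul_sum, ← Finset.sum_add_distrib]
      refine Finset.sum_congr rfl fun a _ => ?_
      rw [add_mul, Finset.sum_mul]
      ring
    have hAg : ∑ a, ((∑ b, pd b (S b a) x) + (2 * (1-w) - 1) * γ a x) * pd a g x
        = (∑ a, ∑ b, pd b (S b a) x * pd a g x) + (2*(1-w)-1) * ∑ a, γ a x * pd a g x := by
      rw [Finset.mul_sum, ← Finset.sum_add_distrib]
      refine Finset.sum_congr rfl fun a _ => ?_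
      rw [add_mul, Finset.sum_mul]
      ring
    have hflux_split : ∑ a, pd a (flux S γ w f g a) x
        = (∑ a, ∑ b, pd a (S a b) x * (pd b f x * g x - f x * pd b g x))
          + (∑ a, ∑ b, S a b x * ((pd a (pd b f) x * g x + pd b f x * pd a g x)
              - (pd a f x * pd b g x + f x * pd a (pd b g) x)))
          + (2*w-1) * ∑ a, (pd a (γ a) x * (f x * g x)
              + γ a x * (pd a f x * g x + f x * pd a g x)) := by
      simp only [hpdD, Finset.sum_add_distrib, mul_add, Finset.mul_sum]
    simp only [canonicalPencil]
    rw [hflux_split, hP, hQ, hR, hAf, hAg]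
    ring
  -- assembled integrals
  have hΔcont : Continuous (fun x => f x * canonicalPencil S γ θ (1-w) g x) := by
    have hc1 : Continuous θ := hθ.continuous
    have hc2 : ∀ a b : Fin n, Continuous (pd a (pd b g)) :=
      fun a b => (contDiff_pd a (hpdg b)).continuous
    have hc3 : ∀ a b : Fin n, Continuous (pd b (S b a)) :=
      fun a b => (contDiff_pd b (hS b a)).continuous
    have hc4 : ∀ a, Continuous (γ a) := fun a => (hγ a).continuous
    have hc5 : ∀ a, Continuous (pd a (γ a)) := fun a => (contDiff_pd a (hγ a)).continuous
    have hc6 : ∀ a, Continuous (pd a g) := fun a => (hpdg a).continuous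
    have hc7 : Continuous f := hf.continuous
    have hc8 : Continuous g := hg.continuous
    unfold canonicalPencil; fun_prop
  have hI1 : Integrable (fun x => f x * canonicalPencil S γ θ (1-w) g x) :=
    hΔcont.integrable_of_hasCompactSupport hfc.mul_right
  have hI2 : ∀ a, Integrable (fun x => pd a (flux S γ w f g a) x) := fun a =>
    ((contDiff_pd a (hflux_smooth a)).continuous).integrable_of_hasCompactSupport
      (hasCompactSupport_pd a (hflux_cs a))
  have hI3 : Integrable (fun x => (1/2 : ℝ) * ∑ a, pd a (flux S γ w f g a) x) :=
    (integrable_finset_sum _ (fun a _ => hI2 a)).const_mul _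
  calc ∫ x, canonicalPencil S γ θ w f x * g x
      = ∫ x, (f x * canonicalPencil S γ θ (1 - w) g x
          + (1/2) * ∑ a, pd a (flux S γ w f g a) x) := by simp only [key]
    _ = (∫ x, f x * canonicalPencil S γ θ (1 - w) g x)
          + ∫ x, (1/2 : ℝ) * ∑ a, pd a (flux S γ w f g a) x := integral_add hI1 hI3
    _ = ∫ x, f x * canonicalPencil S γ θ (1 - w) g x := by
        rw [integral_const_mul, integral_finset_sum _ (fun a _ => hI2 a)]
        simp [integral_pd_eq_zero _ (hflux_smooth _) (hflux_cs _)]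
end

section
/- Let (S^{ab}, γ^a, θ) and (S'^{ab}, γ'^a, θ') be two triples of smooth functions on ℝⁿ with S^{ab} = S^{ba} and S'^{ab} = S'^{ba}, and let Δ_w and Δ'_w be the associated canonical pencils. If for some weight w₀ ∈ ℝ with w₀ ∉ {0, 1/2, 1} the operators coincide at w₀, i.e. Δ_{w₀} f = Δ'_{w₀} f for all smooth f on ℝⁿ, then S^{ab} = S'^{ab}, γ^a = γ'^a and θ = θ'; hence there is a unique canonical pencil passing through a given operator on densities of a non-singular weight w₀ ≠ 0, 1/2, 1. -/
open scoped BigOperators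

lemma pd_const {n : ℕ} (a : Fin n) (c : ℝ) : pd a (fun _ => c) = fun _ => 0 := by
  funext x; simp [pd]

lemma pd_coord {n : ℕ} (a c : Fin n) :
    pd a (fun x : Fin n → ℝ => x c) = fun _ => if c = a then 1 else 0 := by
  funext x
  show fderiv ℝ (fun x : Fin n → ℝ => x c) x (Pi.single a 1) = _
  have h : (fun x : Fin n → ℝ => x c)
      = fun x => (ContinuousLinearMap.proj c : (Fin n → ℝ) →L[ℝ] ℝ) x := rfl
  rw [h, ContinuousLinearMap.fderiv]
  simp [Pi.single_apply]

lemma pd_lin {n : ℕ} (a c d : Fin n) (k1 k2 : ℝ) :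
    pd a (fun x : Fin n → ℝ => x c * k1 + x d * k2)
      = fun _ => (if c = a then 1 else 0) * k1 + (if d = a then 1 else 0) * k2 := by
  funext x
  show fderiv ℝ _ x (Pi.single a 1) = _
  have h : (fun x : Fin n → ℝ => x c * k1 + x d * k2)
      = fun x => (k1 • (ContinuousLinearMap.proj c : (Fin n → ℝ) →L[ℝ] ℝ)
        + k2 • (ContinuousLinearMap.proj d : (Fin n → ℝ) →L[ℝ] ℝ)) x := by
    funext x; simp [mul_comm]
  rw [h, ContinuousLinearMap.fderiv]
  simp [Pi.single_apply, mul_comm]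

lemma pd_quad {n : ℕ} (a c d : Fin n) :
    pd a (fun x : Fin n → ℝ => x c * x d)
      = fun x => x c * (if d = a then 1 else 0) + x d * (if c = a then 1 else 0) := by
  funext x
  show fderiv ℝ _ x (Pi.single a 1) = _
  have hc : DifferentiableAt ℝ (fun x : Fin n → ℝ => x c) x :=
    ((ContinuousLinearMap.proj c : (Fin n → ℝ) →L[ℝ] ℝ).differentiable).differentiableAt
  have hd : DifferentiableAt ℝ (fun x : Fin n → ℝ => x d) x :=
    ((ContinuousLinearMap.proj d : (Fin n → ℝ) →L[ℝ] ℝ).differentiable).differentiableAt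
  rw [fderiv_fun_mul hc hd]
  have h1 : fderiv ℝ (fun x : Fin n → ℝ => x c) x
      = (ContinuousLinearMap.proj c : (Fin n → ℝ) →L[ℝ] ℝ) :=
    (ContinuousLinearMap.proj c : (Fin n → ℝ) →L[ℝ] ℝ).fderiv
  have h2 : fderiv ℝ (fun x : Fin n → ℝ => x d) x
      = (ContinuousLinearMap.proj d : (Fin n → ℝ) →L[ℝ] ℝ) :=
    (ContinuousLinearMap.proj d : (Fin n → ℝ) →L[ℝ] ℝ).fderiv
  simp [h1, h2, Pi.single_apply]

/-- if two canonical pencils agree at a single non-singular weight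
`w₀ ∉ {0, 1/2, 1}` (as operators on smooth functions), then their data coincide:
`S = S'`, `γ = γ'`, `θ = θ'`; hence there is a unique canonical pencil passing through a
given operator on densities of non-singular weight. -/
theorem canonicalPencil_unique_through_nonsingular_weight {n : ℕ}
    (S S' : Fin n → Fin n → (Fin n → ℝ) → ℝ)
    (γ γ' : Fin n → (Fin n → ℝ) → ℝ) (θ θ' : (Fin n → ℝ) → ℝ)
    (hS : ∀ a b, ContDiff ℝ (⊤ : ℕ∞) (S a b)) (hSsym : ∀ a b, S a b = S b a)
    (hγ : ∀ a, ContDiff ℝ (⊤ : ℕ∞) (γ a)) (hθ : ContDiff ℝ (⊤ : ℕ∞) θ)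
    (hS' : ∀ a b, ContDiff ℝ (⊤ : ℕ∞) (S' a b)) (hS'sym : ∀ a b, S' a b = S' b a)
    (hγ' : ∀ a, ContDiff ℝ (⊤ : ℕ∞) (γ' a)) (hθ' : ContDiff ℝ (⊤ : ℕ∞) θ')
    (w₀ : ℝ) (hw₀ : w₀ ∉ ({0, 1/2, 1} : Set ℝ))
    (heq : ∀ f : (Fin n → ℝ) → ℝ, ContDiff ℝ (⊤ : ℕ∞) f →
      canonicalPencil S γ θ w₀ f = canonicalPencil S' γ' θ' w₀ f) :
    (∀ a b, S a b = S' a b) ∧ (∀ a, γ a = γ' a) ∧ θ = θ' := by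
  simp only [Set.mem_insert_iff, Set.mem_singleton_iff, not_or] at hw₀
  obtain ⟨hw0, hwh, hw1⟩ := hw₀
  have hcoord : ∀ c : Fin n, ContDiff ℝ (⊤ : ℕ∞) (fun x : Fin n → ℝ => x c) := fun c =>
    (ContinuousLinearMap.proj c : (Fin n → ℝ) →L[ℝ] ℝ).contDiff
  -- from the constant test function
  have key0 : ∀ x, w₀ * (∑ a, pd a (γ a) x) + w₀ * (w₀ - 1) * θ x
      = w₀ * (∑ a, pd a (γ' a) x) + w₀ * (w₀ - 1) * θ' x := by
    intro x
    have h := congrFun (heq (fun _ => (1:ℝ)) contDiff_const) x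
    simp only [canonicalPencil, pd_const] at h
    simp only [mul_zero, mul_one, Finset.sum_const_zero, add_zero, zero_add] at h
    linarith
  -- from linear test functions
  have key1 : ∀ (c : Fin n) x,
      (∑ b, pd b (S b c) x) + (2 * w₀ - 1) * γ c x
        = (∑ b, pd b (S' b c) x) + (2 * w₀ - 1) * γ' c x := by
    intro c x
    have h := congrFun (heq (fun x => x c) (hcoord c)) x
    simp only [canonicalPencil, pd_coord, pd_const] at h
    simp only [mul_zero, mul_one, mul_ite, Finset.sum_const_zero, Finset.sum_ite_eq,
      Finset.mem_univ, if_true, add_zero, zero_add] at h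
    have h0 := key0 x
    linear_combination 2 * h - x c * h0
  -- from quadratic test functions
  have key2 : ∀ (c d : Fin n) x,
      S c d x + S d c x = S' c d x + S' d c x := by
    intro c d x
    have hq : ContDiff ℝ (⊤ : ℕ∞) (fun x : Fin n → ℝ => x c * x d) :=
      (hcoord c).mul (hcoord d)
    have h := congrFun (heq _ hq) x
    simp only [canonicalPencil, pd_quad, pd_lin] at h
    simp only [mul_ite, ite_mul, mul_one, mul_zero, one_mul, zero_mul, mul_add,
      Finset.sum_add_distrib, Finset.sum_ite_eq, Finset.mem_univ, if_true,
      Finset.sum_const_zero, add_zero, zero_add] at h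
    have h0 := key0 x
    have h1 := key1 c x
    have h2 := key1 d x
    linear_combination 2 * h - x c * h2 - x d * h1 - (x c * x d) * h0
  have hSeq : ∀ a b, S a b = S' a b := by
    intro a b
    funext x
    have h := key2 a b x
    have hs1 := congrFun (hSsym a b) x
    have hs2 := congrFun (hS'sym a b) x
    linarith
  have hγeq : ∀ a, γ a = γ' a := by
    intro a
    funext x
    have h := key1 a x
    have hsum : (∑ b, pd b (S b a) x) = (∑ b, pd b (S' b a) x) := by
      refine Finset.sum_congr rfl fun b _ => ?_
      rw [hSeq b a]
    have hne : (2 * w₀ - 1) ≠ 0 := by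
      intro hcon; apply hwh; linarith
    have : (2 * w₀ - 1) * γ a x = (2 * w₀ - 1) * γ' a x := by linarith
    exact mul_left_cancel₀ hne this
  have hθeq : θ = θ' := by
    funext x
    have h := key0 x
    have hsum : (∑ a, pd a (γ a) x) = (∑ a, pd a (γ' a) x) := by
      refine Finset.sum_congr rfl fun a _ => ?_
      rw [hγeq a]
    have hne : w₀ * (w₀ - 1) ≠ 0 := by
      refine mul_ne_zero hw0 ?_
      intro hcon; apply hw1; linarith
    have : w₀ * (w₀ - 1) * θ x = w₀ * (w₀ - 1) * θ' x := by
      linear_combination h - w₀ * hsum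
    exact mul_left_cancel₀ hne this
  exact ⟨hSeq, hγeq, hθeq⟩
end
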